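/- Let ξ = ( !![1,0; 1,1], !![−1,0; 0,1] ) ∈ M₂(ℂ) × M₂(ℂ). Under the dual action of H = SL₂(ℂ) × GL₂(ℂ) × ℂˣ, the stabilizer of ξ is exactly the one-dimensional family { ( s·!![1,β; 0,1], s·!![1,−β; 0,1], 1 ) : β ∈ ℂ, s ∈ {1,−1} }; that is, for (h₁,h₂,z) ∈ H one has ( z·((h₂*)⁻¹)ᵀ·ξ₁·h₁ᵀ , (h₂⁻¹)ᵀ·ξ₂·h₁ᵀ ) = (ξ₁,ξ₂) if and only if there exist β ∈ ℂ and s ∈ {1,−1} with h₁ = s·!![1,β; 0,1], h₂ = s·!![1,−β; 0,1] and z = 1. -/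

import Mathlib

open Matrix

/-- For `g = !![a,b; c,d]` with determinant `Δ`, `g* = Δ⁻¹ • !![a,-b; -c,d]`. -/
noncomputable def gstar (g : Matrix (Fin 2) (Fin 2) ℂ) : Matrix (Fin 2) (Fin 2) ℂ :=
  (g.det)⁻¹ • !![g 0 0, -(g 0 1); -(g 1 0), g 1 1]

/-- The group `H = SL₂(ℂ) × GL₂(ℂ) × ℂˣ`. -/
abbrev H := Matrix.SpecialLinearGroup (Fin 2) ℂ × GL (Fin 2) ℂ × ℂˣ

/-- The dual action `(h₁,h₂,z)·(ξ₁,ξ₂) = ( z·((h₂*)⁻¹)ᵀ·ξ₁·h₁ᵀ , (h₂⁻¹)ᵀ·ξ₂·h₁ᵀ )`. -/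
noncomputable def dact (h : H) (ξ : Matrix (Fin 2) (Fin 2) ℂ × Matrix (Fin 2) (Fin 2) ℂ) :
    Matrix (Fin 2) (Fin 2) ℂ × Matrix (Fin 2) (Fin 2) ℂ :=
  ((h.2.2 : ℂ) • (((gstar (h.2.1 : Matrix (Fin 2) (Fin 2) ℂ))⁻¹)ᵀ * ξ.1 *
      ((h.1 : Matrix.SpecialLinearGroup (Fin 2) ℂ) : Matrix (Fin 2) (Fin 2) ℂ)ᵀ),
    (((h.2.1⁻¹ : GL (Fin 2) ℂ) : Matrix (Fin 2) (Fin 2) ℂ))ᵀ * ξ.2 *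
      ((h.1 : Matrix.SpecialLinearGroup (Fin 2) ℂ) : Matrix (Fin 2) (Fin 2) ℂ)ᵀ)

/-- The covector `ξ = ( !![1,0; 1,1], !![-1,0; 0,1] )`. -/
def xi : Matrix (Fin 2) (Fin 2) ℂ × Matrix (Fin 2) (Fin 2) ℂ :=
  (!![1, 0; 1, 1], !![-1, 0; 0, 1])

lemma gstar_inv (B : Matrix (Fin 2) (Fin 2) ℂ) (hB : B.det ≠ 0) :
    (gstar B)⁻¹ = !![B 1 1, B 0 1; B 1 0, B 0 0] := by
  apply Matrix.inv_eq_right_inv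
  rw [Matrix.det_fin_two] at hB
  rw [gstar]
  ext i j
  fin_cases i <;> fin_cases j <;>
    · simp [Matrix.mul_apply, Fin.sum_univ_two, Matrix.one_apply, Matrix.det_fin_two]
      field_simp
      ring

lemma inv_fin_two' (B : Matrix (Fin 2) (Fin 2) ℂ) (hB : B.det ≠ 0) :
    B⁻¹ = (B.det)⁻¹ • !![B 1 1, -(B 0 1); -(B 1 0), B 0 0] := by
  apply Matrix.inv_eq_right_inv
  rw [Matrix.det_fin_two] at hB
  have hB' : B 0 0 * B 1 1 - B 1 0 * B 0 1 ≠ 0 := by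
    intro h; apply hB; linear_combination h
  ext i j
  fin_cases i <;> fin_cases j <;>
    · simp [Matrix.mul_apply, Fin.sum_univ_two, Matrix.one_apply, Matrix.det_fin_two]
      field_simp
      ring

theorem stmt7 (h₁ : Matrix.SpecialLinearGroup (Fin 2) ℂ) (h₂ : GL (Fin 2) ℂ) (z : ℂˣ) :
    dact (h₁, h₂, z) xi = xi ↔
      ∃ (β s : ℂ), (s = 1 ∨ s = -1) ∧
        (h₁ : Matrix (Fin 2) (Fin 2) ℂ) = s • !![1, β; 0, 1] ∧
        (h₂ : Matrix (Fin 2) (Fin 2) ℂ) = s • !![1, -β; 0, 1] ∧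
        z = 1 := by
  have hBu : IsUnit ((h₂ : Matrix (Fin 2) (Fin 2) ℂ)).det :=
    (Matrix.isUnit_iff_isUnit_det _).mp ⟨h₂, rfl⟩
  have hB : ((h₂ : Matrix (Fin 2) (Fin 2) ℂ)).det ≠ 0 := hBu.ne_zero
  constructor
  · intro h
    have h1 := congr_arg Prod.fst h
    have h2 := congr_arg Prod.snd h
    simp only [dact, xi] at h1 h2
    rw [gstar_inv _ hB] at h1
    rw [Matrix.coe_units_inv, inv_fin_two' _ hB] at h2
    have e1 := congrFun (congrFun h1 0) 0
    have e2 := congrFun (congrFun h1 0) 1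
    have e3 := congrFun (congrFun h1 1) 0
    have e4 := congrFun (congrFun h1 1) 1
    have f1 := congrFun (congrFun h2 0) 0
    have f2 := congrFun (congrFun h2 0) 1
    have f3 := congrFun (congrFun h2 1) 0
    have f4 := congrFun (congrFun h2 1) 1
    simp [Matrix.mul_apply, Fin.sum_univ_two, Matrix.transpose_apply, Matrix.vecHead,
      Matrix.vecTail] at e1 e2 e3 e4 f1 f2 f3 f4
    set a := (h₁ : Matrix (Fin 2) (Fin 2) ℂ) 0 0 with ha_def
    set b := (h₁ : Matrix (Fin 2) (Fin 2) ℂ) 0 1 with hb_def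
    set c := (h₁ : Matrix (Fin 2) (Fin 2) ℂ) 1 0 with hc_def
    set d := (h₁ : Matrix (Fin 2) (Fin 2) ℂ) 1 1 with hd_def
    set p := (h₂ : Matrix (Fin 2) (Fin 2) ℂ) 0 0 with hp_def
    set q := (h₂ : Matrix (Fin 2) (Fin 2) ℂ) 0 1 with hq_def
    set r := (h₂ : Matrix (Fin 2) (Fin 2) ℂ) 1 0 with hr_def
    set s2 := (h₂ : Matrix (Fin 2) (Fin 2) ℂ) 1 1 with hs2_def
    set Δ := ((h₂ : Matrix (Fin 2) (Fin 2) ℂ)).det with hΔ_def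
    set w := (z : ℂ) with hw_def
    have hw : w ≠ 0 := Units.ne_zero z
    have hdetA : a * d - b * c = 1 := by
      have := h₁.prop
      rw [Matrix.det_fin_two] at this
      exact this
    have hΔpq : Δ = p * s2 - q * r := Matrix.det_fin_two _
    -- normalize f-equations
    set δ : ℂ := Δ⁻¹ with hδ_def
    have hδ : δ * Δ = 1 := inv_mul_cancel₀ hB
    have F1 : s2 * a + r * b = Δ := by
      linear_combination (-Δ) * f1 - (s2 * a + r * b) * hδ
    have F2 : s2 * c + r * d = 0 := by
      linear_combination (-Δ) * f2 - (s2 * c + r * d) * hδ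
    have F3 : q * a + p * b = 0 := by
      linear_combination Δ * f3 - (q * a + p * b) * hδ
    have F4 : q * c + p * d = Δ := by
      linear_combination Δ * f4 - (q * c + p * d) * hδ
    have E2 : r * c = 0 := by linear_combination e2 - F2
    have hpa : w * (p * a) = 1 := by linear_combination e3 - w * F3
    have ha : a ≠ 0 := by
      intro h0
      apply one_ne_zero (α := ℂ)
      rw [← hpa, h0]; ring
    have hp : p ≠ 0 := by
      intro h0
      apply one_ne_zero (α := ℂ)
      rw [← hpa, h0]; ring
    have E1 : w * (Δ + r * a) = 1 := by linear_combination e1 - w * F1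
    have E4 : w * (Δ + p * c) = 1 := by linear_combination e4 - w * F4
    have hra_pc : r * a = p * c := by
      have hh : w * (r * a) = w * (p * c) := by linear_combination E1 - E4
      exact mul_left_cancel₀ hw hh
    have hrc : r = 0 ∧ c = 0 := by
      rcases mul_eq_zero.mp E2 with h0 | h0
      · refine ⟨h0, ?_⟩
        have : p * c = 0 := by rw [← hra_pc, h0]; ring
        exact (mul_eq_zero.mp this).resolve_left hp
      · refine ⟨?_, h0⟩
        have : r * a = 0 := by rw [hra_pc, h0]; ring
        exact (mul_eq_zero.mp this).resolve_right ha
    obtain ⟨hr0, hc0⟩ := hrc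
    have had : a * d = 1 := by linear_combination hdetA + b * hc0
    have hΔps : Δ = p * s2 := by rw [hΔpq, hr0]; ring
    have hs2 : s2 ≠ 0 := by
      intro h0
      exact hB (by rw [hΔps, h0]; ring)
    have hap : a = p := by
      have hh : s2 * a = s2 * p := by
        rw [hr0] at F1
        linear_combination F1 + hΔps
      exact mul_left_cancel₀ hs2 hh
    have hΔ1 : Δ = 1 := by
      rw [hc0] at F4
      -- F4 : q*0 + p*d = Δ
      rw [← hap] at F4
      linear_combination -F4 + had
    have hwone : w = 1 := by
      have : w * Δ = 1 := by
        rw [hr0] at E1; linear_combination E1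
      rw [hΔ1, mul_one] at this
      exact this
    have haa : a * a = 1 := by
      rw [hwone, one_mul, ← hap] at hpa
      exact hpa
    have hda : d = a := by
      have : a * d = a * a := by rw [had, haa]
      exact mul_left_cancel₀ ha this
    have hs2a : s2 = a := by
      have : a * s2 = a * a := by
        rw [hΔps, ← hap] at hΔ1
        rw [hΔ1, haa]
      exact mul_left_cancel₀ ha this
    have hqb : q = -b := by
      have hh : a * q = a * (-b) := by
        rw [← hap] at F3
        linear_combination F3
      exact mul_left_cancel₀ ha hh
    refine ⟨a * b, a, ?_, ?_, ?_, ?_⟩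
    · rcases mul_self_eq_one_iff.mp haa with h' | h'
      · exact Or.inl h'
      · exact Or.inr h'
    · ext i j
      fin_cases i <;> fin_cases j <;>
        simp only [Matrix.smul_apply, Matrix.cons_val', Matrix.cons_val_zero,
          Matrix.cons_val_one, Matrix.head_cons, Matrix.head_fin_const, Matrix.empty_val',
          Matrix.cons_val_fin_one, smul_eq_mul]
      · show a = a * 1; ring
      · show b = a * (a * b); linear_combination -b * haa
      · show c = a * 0; rw [hc0]; ring
      · show d = a * 1; rw [hda]; ring
    · ext i j
      fin_cases i <;> fin_cases j <;>
        simp only [Matrix.smul_apply, Matrix.cons_val', Matrix.cons_val_zero,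
          Matrix.cons_val_one, Matrix.head_cons, Matrix.head_fin_const, Matrix.empty_val',
          Matrix.cons_val_fin_one, smul_eq_mul]
      · show p = a * 1; rw [hap]; ring
      · show q = a * -(a * b); linear_combination hqb + b * haa
      · show r = a * 0; rw [hr0]; ring
      · show s2 = a * 1; rw [hs2a]; ring
    · exact Units.ext hwone
  · rintro ⟨β, s, hs, hA1, hB1, rfl⟩
    have hdB : ((h₂ : Matrix (Fin 2) (Fin 2) ℂ)).det = s * s := by
      rw [hB1, Matrix.det_fin_two]
      simp
    simp only [dact, xi]
    rw [gstar_inv _ hB, Matrix.coe_units_inv, inv_fin_two' _ hB]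
    refine Prod.ext ?_ ?_
    · ext i j
      rcases hs with rfl | rfl <;>
      · fin_cases i <;> fin_cases j <;>
          simp [Matrix.mul_apply, Fin.sum_univ_two, hA1, hB1, hdB, Matrix.vecHead,
            Matrix.vecTail]
    · ext i j
      rcases hs with rfl | rfl <;>
      · fin_cases i <;> fin_cases j <;>
          simp [Matrix.mul_apply, Fin.sum_univ_two, hA1, hB1, hdB, Matrix.vecHead,
            Matrix.vecTail]
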